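/- For any finite subset A of an abelian group and positive integers k, l, one has ∑_{s ∈ G^{k-1}} ∑_{t ∈ G^{l-1}} E(A_s, A_t) = E_{k+l}(A), where A_s = A ∩ (A - s_1) ∩ ... ∩ (A - s_{k-1}). -/

import Mathlib

open Finset

variable {G : Type*} [AddCommGroup G] [Fintype G] [DecidableEq G]

/-- `(A ∘ A)(x) = |A ∩ (A − x)| = |{a ∈ A : a + x ∈ A}|`. -/
def corr (A : Finset G) (x : G) : ℕ := (A.filter fun a => a + x ∈ A).card

/-- For a tuple `s = (s_1, …, s_m)`, `fib A s = A ∩ (A − s_1) ∩ ⋯ ∩ (A − s_m)`. -/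
def fib (A : Finset G) {m : ℕ} (s : Fin m → G) : Finset G :=
  A.filter fun a => ∀ i, a + s i ∈ A

/-- The additive energy `E(A,B) = |{(a₁,b₁,a₂,b₂) : a₁ + b₁ = a₂ + b₂}|`. -/
def energy (A B : Finset G) : ℕ :=
  (((A ×ˢ B) ×ˢ A ×ˢ B).filter fun p => p.1.1 + p.1.2 = p.2.1 + p.2.2).card

lemma corr_eq_sum (B : Finset G) (x : G) :
    corr B x = ∑ b : G, (if b ∈ B ∧ b + x ∈ B then 1 else 0) := by
  unfold corr
  have h : B.filter (fun a => a + x ∈ B) = univ.filter (fun b => b ∈ B ∧ b + x ∈ B) := by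
    ext b; simp
  rw [h, Finset.card_filter]

lemma ite_and_mul' (P Q : Prop) [Decidable P] [Decidable Q] :
    (if P ∧ Q then (1:ℕ) else 0) = (if P then 1 else 0) * (if Q then 1 else 0) := by
  by_cases hP : P <;> by_cases hQ : Q <;> simp [hP, hQ]

lemma innerSum (B C : Finset G) (b1 c2 : G) :
    (∑ x : G, (if b1 + x ∈ B then (1:ℕ) else 0) * (if c2 + x ∈ C then 1 else 0))
      = ∑ b2 ∈ B, ∑ c1 ∈ C, (if b1 + c1 = b2 + c2 then 1 else 0) := by
  calc (∑ x : G, (if b1 + x ∈ B then (1:ℕ) else 0) * (if c2 + x ∈ C then 1 else 0))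
      = ∑ y : G, (if y ∈ B then (1:ℕ) else 0) * (if c2 + (y - b1) ∈ C then 1 else 0) := by
        refine Fintype.sum_equiv (Equiv.addLeft b1) _ _ fun x => ?_
        simp only [Equiv.coe_addLeft, add_sub_cancel_left]
        rfl
    _ = ∑ y ∈ B, (if c2 + (y - b1) ∈ C then (1:ℕ) else 0) := by
        simp only [boole_mul]
        rw [Finset.sum_ite_mem, univ_inter]
    _ = ∑ b2 ∈ B, ∑ c1 ∈ C, (if b1 + c1 = b2 + c2 then (1:ℕ) else 0) := by
        refine Finset.sum_congr rfl fun b2 _ => ?_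
        have h : ∀ c1 : G, (b1 + c1 = b2 + c2) ↔ (c1 = c2 + (b2 - b1)) := by
          intro c1
          constructor
          · intro h'
            have h'' : c1 = b2 + c2 - b1 := by rw [← h']; abel
            rw [h'']; abel
          · intro h'
            rw [h']; abel
        rw [Finset.sum_congr rfl fun c1 _ => if_congr (h c1) rfl rfl,
          Finset.sum_ite_eq' C (c2 + (b2 - b1)) (fun _ => (1:ℕ))]

lemma energy_eq_sum (B C : Finset G) :
    energy B C = ∑ x : G, corr B x * corr C x := by
  unfold energy
  rw [Finset.card_filter, Finset.sum_product]
  simp only [Finset.sum_product]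
  calc (∑ b1 ∈ B, ∑ c1 ∈ C, ∑ b2 ∈ B, ∑ c2 ∈ C,
          if b1 + c1 = b2 + c2 then (1:ℕ) else 0)
      = ∑ b1 ∈ B, ∑ c2 ∈ C, ∑ b2 ∈ B, ∑ c1 ∈ C,
          if b1 + c1 = b2 + c2 then (1:ℕ) else 0 := by
        refine Finset.sum_congr rfl fun b1 _ => ?_
        rw [Finset.sum_comm]
        conv_rhs => rw [Finset.sum_comm]
        exact Finset.sum_congr rfl fun b2 _ => Finset.sum_comm
    _ = ∑ b1 ∈ B, ∑ c2 ∈ C, ∑ x : G,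
          (if b1 + x ∈ B then (1:ℕ) else 0) * (if c2 + x ∈ C then 1 else 0) := by
        exact Finset.sum_congr rfl fun b1 _ => Finset.sum_congr rfl fun c2 _ =>
          (innerSum B C b1 c2).symm
    _ = ∑ b1 ∈ B, ∑ x : G, ∑ c2 ∈ C,
          (if b1 + x ∈ B then (1:ℕ) else 0) * (if c2 + x ∈ C then 1 else 0) :=
        Finset.sum_congr rfl fun b1 _ => Finset.sum_comm
    _ = ∑ x : G, ∑ b1 ∈ B, ∑ c2 ∈ C,
          (if b1 + x ∈ B then (1:ℕ) else 0) * (if c2 + x ∈ C then 1 else 0) :=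
        Finset.sum_comm
    _ = ∑ x : G, corr B x * corr C x := by
        refine Finset.sum_congr rfl fun x _ => ?_
        rw [← Finset.sum_mul_sum]
        unfold corr
        rw [Finset.card_filter, Finset.card_filter]

lemma sum_corr_fib (A : Finset G) (m : ℕ) (x : G) :
    ∑ s : Fin m → G, corr (fib A s) x = corr A x ^ (m + 1) := by
  have hfib : ∀ (s : Fin m → G) (a : G), a ∈ fib A s ↔ a ∈ A ∧ ∀ i, a + s i ∈ A := by
    intro s a; simp [fib]
  calc ∑ s : Fin m → G, corr (fib A s) x
      = ∑ s : Fin m → G, ∑ a : G,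
          (if a ∈ A ∧ a + x ∈ A then (1:ℕ) else 0) *
            ∏ i, (if a + s i ∈ A ∧ a + x + s i ∈ A then (1:ℕ) else 0) := by
        refine Finset.sum_congr rfl fun s _ => ?_
        rw [corr_eq_sum]
        refine Finset.sum_congr rfl fun a _ => ?_
        rw [Finset.prod_boole]
        simp only [mem_univ, forall_true_left]
        rw [← ite_and_mul']
        refine if_congr ?_ rfl rfl
        simp only [hfib]
        constructor
        · rintro ⟨⟨h1, h2⟩, h3, h4⟩
          exact ⟨⟨h1, h3⟩, fun i => ⟨h2 i, h4 i⟩⟩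
        · rintro ⟨⟨h1, h3⟩, h⟩
          exact ⟨⟨h1, fun i => (h i).1⟩, h3, fun i => (h i).2⟩
    _ = ∑ a : G, (if a ∈ A ∧ a + x ∈ A then (1:ℕ) else 0) *
          ∑ s : Fin m → G, ∏ i, (if a + s i ∈ A ∧ a + x + s i ∈ A then (1:ℕ) else 0) := by
        rw [Finset.sum_comm]
        exact Finset.sum_congr rfl fun a _ => (Finset.mul_sum _ _ _).symm
    _ = ∑ a : G, (if a ∈ A ∧ a + x ∈ A then (1:ℕ) else 0) * corr A x ^ m := by
        refine Finset.sum_congr rfl fun a _ => ?_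
        congr 1
        rw [← Fintype.sum_pow (fun y : G => if a + y ∈ A ∧ a + x + y ∈ A then (1:ℕ) else 0) m]
        congr 1
        rw [corr_eq_sum]
        refine Fintype.sum_equiv (Equiv.addLeft a) _ _ fun y => ?_
        simp only [Equiv.coe_addLeft, add_right_comm a x y]
        rfl
    _ = corr A x ^ (m + 1) := by
        rw [← Finset.sum_mul, ← corr_eq_sum, pow_succ']

/-- `∑_{s ∈ G^{k-1}} ∑_{t ∈ G^{l-1}} E(A_s, A_t) = E_{k+l}(A)`, where
`E_m(A) = ∑_x (A ∘ A)(x)^m` and `A_s = A ∩ (A − s_1) ∩ ⋯ ∩ (A − s_{k-1})`. -/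
theorem stmt3 (A : Finset G) (k l : ℕ) (hk : 1 ≤ k) (hl : 1 ≤ l) :
    ∑ s : Fin (k - 1) → G, ∑ t : Fin (l - 1) → G, energy (fib A s) (fib A t)
      = ∑ x : G, corr A x ^ (k + l) := by
  calc ∑ s : Fin (k - 1) → G, ∑ t : Fin (l - 1) → G, energy (fib A s) (fib A t)
      = ∑ s : Fin (k - 1) → G, ∑ t : Fin (l - 1) → G, ∑ x : G,
          corr (fib A s) x * corr (fib A t) x :=
        Finset.sum_congr rfl fun s _ => Finset.sum_congr rfl fun t _ => energy_eq_sum _ _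
    _ = ∑ s : Fin (k - 1) → G, ∑ x : G, ∑ t : Fin (l - 1) → G,
          corr (fib A s) x * corr (fib A t) x :=
        Finset.sum_congr rfl fun s _ => Finset.sum_comm
    _ = ∑ x : G, ∑ s : Fin (k - 1) → G, ∑ t : Fin (l - 1) → G,
          corr (fib A s) x * corr (fib A t) x := Finset.sum_comm
    _ = ∑ x : G, (∑ s : Fin (k - 1) → G, corr (fib A s) x) *
          (∑ t : Fin (l - 1) → G, corr (fib A t) x) :=
        Finset.sum_congr rfl fun x _ => (Finset.sum_mul_sum _ _ _ _).symm
    _ = ∑ x : G, corr A x ^ (k + l) := by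
        refine Finset.sum_congr rfl fun x _ => ?_
        rw [sum_corr_fib, sum_corr_fib, ← pow_add]
        congr 1
        omega
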